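/- Given a CI-statement c = S^+,S^-:S_1▷S_2 on O, let ĉ be the C^{ℵ0}I-statement with precondition asserting multiplicity = 1 for each element of S^+, = 0 for each element of S^- ∪ S_1 ∪ S_2, and ≤ 1 for all remaining elements of O, and comparison adding 1 copy of each element of S_1 versus 1 copy of each element of S_2. Then for any CI-net N, the CI-flips of N on subsets of O coincide exactly with the CI-flips of the translated net N̂ = {ĉ : c ∈ N} restricted to multisets that are sets (all multiplicities ≤ 1). -/
import Mathlib


variable {O : Type*} [Fintype O] [DecidableEq O]

/-- A strict partial order: irreflexive, asymmetric, transitive. -/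
def IsPrefRel {α : Type*} (r : α → α → Prop) : Prop :=
  (∀ a, ¬ r a a) ∧ (∀ a b, r a b → ¬ r b a) ∧ (∀ a b c, r a b → r b c → r a c)

/-- Monotonicity on subsets of `O`: a strict superset is strictly preferred. -/
def Monotonic (r : Finset O → Finset O → Prop) : Prop :=
  ∀ a b : Finset O, b ⊂ a → r a b

/-- A CI-statement `S⁺, S⁻ : S₁ ▷ S₂` on `O`. -/
structure CIStmt (O : Type*) [DecidableEq O] where
  sp : Finset O
  sm : Finset O
  s1 : Finset O
  s2 : Finset O
  h1 : s1.Nonempty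
  h2 : s2.Nonempty
  dpm : Disjoint sp sm
  dp1 : Disjoint sp s1
  dp2 : Disjoint sp s2
  dm1 : Disjoint sm s1
  dm2 : Disjoint sm s2
  d12 : Disjoint s1 s2

/-- `r` satisfies a CI-statement. -/
def SatStmt (r : Finset O → Finset O → Prop) (c : CIStmt O) : Prop :=
  ∀ S' : Finset O, S' ⊆ Finset.univ \ (c.sp ∪ c.sm ∪ c.s1 ∪ c.s2) →
    r (S' ∪ c.sp ∪ c.s1) (S' ∪ c.sp ∪ c.s2)

/-- `r` satisfies a CI-net: monotone and satisfies each statement. -/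
def SatNet (r : Finset O → Finset O → Prop) (N : Set (CIStmt O)) : Prop :=
  Monotonic r ∧ ∀ c ∈ N, SatStmt r c

/-- A CI-net is satisfiable. -/
def CISatisfiable (N : Set (CIStmt O)) : Prop :=
  ∃ r : Finset O → Finset O → Prop, IsPrefRel r ∧ SatNet r N

/-- CI-flip with respect to `N`. -/
def CIFlip (N : Set (CIStmt O)) (a b : Finset O) : Prop :=
  ∃ c ∈ N, ∃ S' ⊆ Finset.univ \ (c.sp ∪ c.sm ∪ c.s1 ∪ c.s2),
    a = S' ∪ c.sp ∪ c.s1 ∧ b = S' ∪ c.sp ∪ c.s2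

/-- Worsening flip: a `⊃`-flip or a CI-flip. -/
def WFlip (N : Set (CIStmt O)) (a b : Finset O) : Prop :=
  b ⊂ a ∨ CIFlip N a b

/-- The intersection of all preference relations satisfying `N`. -/
def Induced (N : Set (CIStmt O)) (a b : Finset O) : Prop :=
  ∀ r : Finset O → Finset O → Prop, IsPrefRel r ∧ SatNet r N → r a b

/-- A comparison relation symbol for multiplicity constraints. -/
inductive CRel
  | ge
  | le
  | eq

/-- A simple multiplicity constraint `o R a`. -/
structure Constraint (O : Type*) where
  obj : O
  rel : CRel
  bound : ℕ

/-- A multiset satisfies a constraint. -/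
def Constraint.Holds {O : Type*} [DecidableEq O] (c : Constraint O) (M : Multiset O) : Prop :=
  match c.rel with
  | .ge => c.bound ≤ M.count c.obj
  | .le => M.count c.obj ≤ c.bound
  | .eq => M.count c.obj = c.bound

/-- A `C^{ℵ₀}I`-statement `P⁺ : P₁ ▷ P₂`: a finite conjunction of constraints
as precondition and two update patterns (nonzero multisets with disjoint
supports). -/
structure CAIStmt (O : Type*) where
  pre : List (Constraint O)
  p1 : Multiset O
  p2 : Multiset O
  h1 : p1 ≠ 0
  h2 : p2 ≠ 0
  hd : ∀ a ∈ p1, a ∉ p2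

/-- A multiset satisfies the precondition of a statement. -/
def SatPre {O : Type*} [DecidableEq O] (M : Multiset O) (c : CAIStmt O) : Prop :=
  ∀ con ∈ c.pre, con.Holds M

/-- Monotonicity on finite multisets over `O`. -/
def MonotonicM {O : Type*} (r : Multiset O → Multiset O → Prop) : Prop :=
  ∀ a b : Multiset O, b < a → r a b

/-- `r` satisfies a `C^{ℵ₀}I`-statement. -/
def SatCAIStmt {O : Type*} [DecidableEq O] (r : Multiset O → Multiset O → Prop)
    (c : CAIStmt O) : Prop :=
  ∀ M' : Multiset O, SatPre M' c → r (M' + c.p1) (M' + c.p2)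

/-- `r` satisfies a `C^{ℵ₀}I`-net. -/
def SatCAINet {O : Type*} [DecidableEq O] (r : Multiset O → Multiset O → Prop)
    (N : Set (CAIStmt O)) : Prop :=
  MonotonicM r ∧ ∀ c ∈ N, SatCAIStmt r c

/-- Satisfiability of a `C^{ℵ₀}I`-net. -/
def CAISatisfiable {O : Type*} [DecidableEq O] (N : Set (CAIStmt O)) : Prop :=
  ∃ r : Multiset O → Multiset O → Prop, IsPrefRel r ∧ SatCAINet r N

/-- CI-flip for a `C^{ℵ₀}I`-net. -/
def CAIFlipCI {O : Type*} [DecidableEq O] (N : Set (CAIStmt O))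
    (a b : Multiset O) : Prop :=
  ∃ c ∈ N, ∃ M' : Multiset O, SatPre M' c ∧ a = M' + c.p1 ∧ b = M' + c.p2

/-- Worsening flip for a `C^{ℵ₀}I`-net. -/
def CAIWFlip {O : Type*} [DecidableEq O] (N : Set (CAIStmt O))
    (a b : Multiset O) : Prop :=
  b < a ∨ CAIFlipCI N a b

/-- The intersection of all preference relations satisfying `N`. -/
def CAIInduced {O : Type*} [DecidableEq O] (N : Set (CAIStmt O))
    (a b : Multiset O) : Prop :=
  ∀ r : Multiset O → Multiset O → Prop, IsPrefRel r ∧ SatCAINet r N → r a b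

/-- A worsening flip confined to the multiset `M`. -/
def ConfFlip {O : Type*} [DecidableEq O] (N : Set (CAIStmt O)) (M : Multiset O)
    (a b : Multiset O) : Prop :=
  CAIWFlip N a b ∧ a ≤ M ∧ b ≤ M

/-- The translation `ĉ` of a CI-statement: multiplicity `= 1` for elements of
`S⁺`, `= 0` for elements of `S⁻ ∪ S₁ ∪ S₂`, `≤ 1` for all remaining elements
of `O`, and the comparison adds one copy of each element of `S₁` versus one
copy of each element of `S₂`. -/
noncomputable def hatStmt (c : CIStmt O) : CAIStmt O where
  pre := (Finset.univ : Finset O).toList.map fun o =>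
    if o ∈ c.sp then ⟨o, CRel.eq, 1⟩
    else if o ∈ c.sm ∪ c.s1 ∪ c.s2 then ⟨o, CRel.eq, 0⟩
    else ⟨o, CRel.le, 1⟩
  p1 := c.s1.val
  p2 := c.s2.val
  h1 := by simpa [Finset.val_eq_zero] using c.h1.ne_empty
  h2 := by simpa [Finset.val_eq_zero] using c.h2.ne_empty
  hd := fun a ha hb =>
    Finset.disjoint_left.mp c.d12 (Finset.mem_val.mp ha) (Finset.mem_val.mp hb)

/-- the CI-flips of a CI-net `N` on subsets of `O` coincide
exactly with the CI-flips of the translated net `N̂ = {ĉ : c ∈ N}` restricted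
to multisets that are sets. -/
lemma count_val (S : Finset O) (o : O) : S.val.count o = if o ∈ S then 1 else 0 := by
  split
  · exact Multiset.count_eq_one_of_mem S.nodup (by assumption)
  · exact Multiset.count_eq_zero_of_notMem (by assumption)

lemma union_val_of_disjoint {A B : Finset O} (h : Disjoint A B) :
    (A ∪ B).val = A.val + B.val := by
  ext o
  rw [Multiset.count_add, count_val, count_val, count_val]
  by_cases hA : o ∈ A
  · have hB := Finset.disjoint_left.mp h hA
    simp [hA, hB, Finset.mem_union]
  · by_cases hB : o ∈ B <;> simp [hA, hB, Finset.mem_union]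

lemma satPre_hat (c : CIStmt O) (M : Multiset O) :
    SatPre M (hatStmt c) ↔ ∀ o : O,
      (o ∈ c.sp → M.count o = 1) ∧ (o ∈ c.sm ∪ c.s1 ∪ c.s2 → M.count o = 0) ∧
      (o ∉ c.sp → o ∉ c.sm ∪ c.s1 ∪ c.s2 → M.count o ≤ 1) := by
  constructor
  · intro h o
    have key : ∀ con ∈ (hatStmt c).pre, con.Holds M := h
    by_cases hp : o ∈ c.sp
    · have := key ⟨o, CRel.eq, 1⟩ (by
        simp only [hatStmt, List.mem_map, Finset.mem_toList]
        exact ⟨o, Finset.mem_univ o, by simp [hp]⟩)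
      simp only [Constraint.Holds] at this
      refine ⟨fun _ => this, fun hm => ?_, fun h' => absurd hp h'⟩
      rcases Finset.mem_union.mp hm with hm | hm
      · rcases Finset.mem_union.mp hm with hm | hm
        · exact absurd hm (Finset.disjoint_left.mp c.dpm hp)
        · exact absurd hm (Finset.disjoint_left.mp c.dp1 hp)
      · exact absurd hm (Finset.disjoint_left.mp c.dp2 hp)
    · by_cases hm : o ∈ c.sm ∪ c.s1 ∪ c.s2
      · have := key ⟨o, CRel.eq, 0⟩ (by
          simp only [hatStmt, List.mem_map, Finset.mem_toList]
          exact ⟨o, Finset.mem_univ o, by rw [if_neg hp, if_pos hm]⟩)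
        simp only [Constraint.Holds] at this
        exact ⟨fun h' => absurd h' hp, fun _ => this, fun _ h' => absurd hm h'⟩
      · have := key ⟨o, CRel.le, 1⟩ (by
          simp only [hatStmt, List.mem_map, Finset.mem_toList]
          exact ⟨o, Finset.mem_univ o, by rw [if_neg hp, if_neg hm]⟩)
        simp only [Constraint.Holds] at this
        exact ⟨fun h' => absurd h' hp, fun h' => absurd h' hm, fun _ _ => this⟩
  · intro h con hcon
    simp only [hatStmt, List.mem_map, Finset.mem_toList] at hcon
    obtain ⟨o, -, rfl⟩ := hcon
    obtain ⟨h1, h2, h3⟩ := h o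
    by_cases hp : o ∈ c.sp
    · rw [if_pos hp]; exact h1 hp
    · by_cases hm : o ∈ c.sm ∪ c.s1 ∪ c.s2
      · rw [if_neg hp, if_pos hm]; exact h2 hm
      · rw [if_neg hp, if_neg hm]; exact h3 hp hm

theorem stmt_10 (N : Set (CIStmt O)) (Sa Sb : Finset O) :
    CIFlip N Sa Sb ↔ CAIFlipCI (hatStmt '' N) Sa.val Sb.val := by
  constructor
  · rintro ⟨c, hc, S', hS', rfl, rfl⟩
    refine ⟨hatStmt c, ⟨c, hc, rfl⟩, (S' ∪ c.sp).val, ?_, ?_, ?_⟩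
    · rw [satPre_hat]
      intro o
      have hS'o : o ∈ S' → o ∉ c.sp ∪ c.sm ∪ c.s1 ∪ c.s2 := fun h => by
        have := hS' h; simp only [Finset.mem_sdiff] at this; exact this.2
      refine ⟨fun hp => ?_, fun hm => ?_, fun hp hm => ?_⟩
      · rw [count_val, if_pos (Finset.mem_union_right _ hp)]
      · rw [count_val, if_neg]
        intro hmem
        rcases Finset.mem_union.mp hmem with h | h
        · exact hS'o h (by rcases Finset.mem_union.mp hm with h' | h'
                           · rcases Finset.mem_union.mp h' with h'' | h''
                             · exact Finset.mem_union_left _ (Finset.mem_union_left _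
                                 (Finset.mem_union_right _ h''))
                             · exact Finset.mem_union_left _ (Finset.mem_union_right _ h'')
                           · exact Finset.mem_union_right _ h')
        · rcases Finset.mem_union.mp hm with h' | h'
          · rcases Finset.mem_union.mp h' with h'' | h''
            · exact Finset.disjoint_left.mp c.dpm h h''
            · exact Finset.disjoint_left.mp c.dp1 h h''
          · exact Finset.disjoint_left.mp c.dp2 h h'
      · rw [count_val]; split <;> omega
    · have hd1 : Disjoint (S' ∪ c.sp) c.s1 := by
        rw [Finset.disjoint_union_left]
        refine ⟨Finset.disjoint_left.mpr fun a ha h1 => ?_, c.dp1⟩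
        have := hS' ha; simp only [Finset.mem_sdiff, Finset.mem_union] at this; tauto
      show (S' ∪ c.sp ∪ c.s1).val = (S' ∪ c.sp).val + c.s1.val
      exact union_val_of_disjoint hd1
    · have hd2 : Disjoint (S' ∪ c.sp) c.s2 := by
        rw [Finset.disjoint_union_left]
        refine ⟨Finset.disjoint_left.mpr fun a ha h2 => ?_, c.dp2⟩
        have := hS' ha; simp only [Finset.mem_sdiff, Finset.mem_union] at this; tauto
      show (S' ∪ c.sp ∪ c.s2).val = (S' ∪ c.sp).val + c.s2.val
      exact union_val_of_disjoint hd2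
  · rintro ⟨chat, ⟨c, hc, rfl⟩, M', hpre, ha, hb⟩
    rw [satPre_hat] at hpre
    -- M' is a set
    have hnodup : M'.Nodup := Multiset.nodup_iff_count_le_one.mpr fun o => by
      obtain ⟨h1, h2, h3⟩ := hpre o
      by_cases hp : o ∈ c.sp
      · have := h1 hp; omega
      · by_cases hm : o ∈ c.sm ∪ c.s1 ∪ c.s2
        · have := h2 hm; omega
        · exact h3 hp hm
    set T := M'.toFinset with hT
    have hTval : T.val = M' := by
      rw [hT, Multiset.toFinset_val, Multiset.dedup_eq_self.mpr hnodup]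
    have hspT : c.sp ⊆ T := fun o ho => by
      rw [hT, Multiset.mem_toFinset, ← Multiset.count_pos, (hpre o).1 ho]; omega
    set S' := T \ c.sp with hS'def
    have hTS' : T = S' ∪ c.sp := by
      rw [hS'def, Finset.sdiff_union_of_subset hspT]
    have hS'sub : S' ⊆ Finset.univ \ (c.sp ∪ c.sm ∪ c.s1 ∪ c.s2) := by
      intro o ho
      rw [hS'def, Finset.mem_sdiff] at ho
      rw [Finset.mem_sdiff]
      refine ⟨Finset.mem_univ o, fun hmem => ?_⟩
      have hoM : 0 < M'.count o := by
        rw [Multiset.count_pos, ← Multiset.mem_toFinset]; exact ho.1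
      obtain ⟨h1, h2, h3⟩ := hpre o
      rcases Finset.mem_union.mp hmem with h | h
      · rcases Finset.mem_union.mp h with h' | h'
        · rcases Finset.mem_union.mp h' with h'' | h''
          · exact ho.2 h''
          · have := h2 (Finset.mem_union_left _ (Finset.mem_union_left _ h'')); omega
        · have := h2 (Finset.mem_union_left _ (Finset.mem_union_right _ h')); omega
      · have := h2 (Finset.mem_union_right _ h); omega
    refine ⟨c, hc, S', hS'sub, ?_, ?_⟩
    · apply Finset.val_injective
      have hd1 : Disjoint (S' ∪ c.sp) c.s1 := by
        rw [Finset.disjoint_union_left]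
        refine ⟨Finset.disjoint_left.mpr fun a ha h1 => ?_, c.dp1⟩
        have := hS'sub ha; simp only [Finset.mem_sdiff, Finset.mem_union] at this; tauto
      show Sa.val = (S' ∪ c.sp ∪ c.s1).val
      rw [union_val_of_disjoint hd1, ← hTS', hTval, ha]; rfl
    · apply Finset.val_injective
      have hd2 : Disjoint (S' ∪ c.sp) c.s2 := by
        rw [Finset.disjoint_union_left]
        refine ⟨Finset.disjoint_left.mpr fun a ha h2 => ?_, c.dp2⟩
        have := hS'sub ha; simp only [Finset.mem_sdiff, Finset.mem_union] at this; tauto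
      show Sb.val = (S' ∪ c.sp ∪ c.s2).val
      rw [union_val_of_disjoint hd2, ← hTS', hTval, hb]; rfl
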